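/- Full support of structured rectangles: There exists N such that for every n ≥ N the following holds with m = n^256. Let ρ ∈ {0,1,*}^n and let X × Y ⊆ [m]^n × ({0,1}^m)^n be a ρ-essentially-structured rectangle with nm − log₂|Y| ≤ n³ + 1. Then for every z ∈ {0,1}^n that agrees with ρ on fix(ρ), there exist x ∈ X and y ∈ Y with G(x,y) = z. -/

import Mathlib

open Finset

namespace SRFS

variable {n m : ℕ}

/-- Truth tables `y : [n] × [m] → Bool`. -/
abbrev Tab (n m : ℕ) := Fin n → Fin m → Bool
/-- Pointer patterns `x : [n] → [m]`. -/
abbrev Pat (n m : ℕ) := Fin n → Fin m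

variable (F : Finset (Fin n)) (z : Fin n → Bool)

/-- The set of tables agreeing with target `z` at the cells selected by `x` on `F`. -/
def A (x : Pat n m) : Finset (Tab n m) :=
  univ.filter fun y => ∀ i ∈ F, y i (x i) = z i

/-- Tables that are wrong somewhere (on `F`) for every pattern in the list `l`. -/
def Miss (l : List (Pat n m)) : Finset (Tab n m) :=
  univ.filter fun y => ∀ x ∈ l, ∃ i ∈ F, y i (x i) ≠ z i

/-- Tables agreeing with `z` on a set `D` of cells. -/
def AD (D : Finset (Fin n × Fin m)) : Finset (Tab n m) :=
  univ.filter fun y => ∀ c ∈ D, y c.1 c.2 = z c.1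

/-- The cell set of a pattern. -/
def C (x : Pat n m) : Finset (Fin n × Fin m) := F.image fun i => (i, x i)

/-- Coordinates where two patterns agree. -/
def K (x x' : Pat n m) : Finset (Fin n) := F.filter fun i => x i = x' i

/-- Overlap weight of two patterns. -/
noncomputable def w (x x' : Pat n m) : ℝ :=
  if (K F x x').card = 0 then 0 else 2 ^ (K F x x').card

lemma w_nonneg (x x' : Pat n m) : 0 ≤ w F x x' := by
  unfold w; split <;> positivity

lemma Miss_anti {l l' : List (Pat n m)} (h : ∀ x ∈ l', x ∈ l) :
    Miss F z l ⊆ Miss F z l' := by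
  intro y hy
  simp only [Miss, mem_filter, mem_univ, true_and] at hy ⊢
  exact fun x hx => hy x (h x hx)

lemma card_split (x : Pat n m) (l : List (Pat n m)) :
    (Miss F z l).card = (Miss F z (x :: l)).card + (A F z x ∩ Miss F z l).card := by
  classical
  have h1 : Miss F z (x :: l) = (Miss F z l).filter (fun y => ∃ i ∈ F, y i (x i) ≠ z i) := by
    ext y
    simp only [Miss, mem_filter, mem_univ, true_and, List.forall_mem_cons]
    tauto
  have h2 : A F z x ∩ Miss F z l
      = (Miss F z l).filter (fun y => ¬ ∃ i ∈ F, y i (x i) ≠ z i) := by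
    ext y
    simp only [A, Miss, mem_inter, mem_filter, mem_univ, true_and]
    push_neg
    tauto
  rw [h1, h2, Finset.card_filter_add_card_filter_not]

lemma A_inter_A (x x' : Pat n m) :
    A F z x ∩ A F z x' = AD z (C F x ∪ C F x') := by
  ext y
  simp only [A, AD, C, mem_inter, mem_filter, mem_univ, true_and, mem_union, mem_image]
  constructor
  · rintro ⟨h1, h2⟩ c hc
    rcases hc with ⟨i, hi, rfl⟩ | ⟨i, hi, rfl⟩
    · exact h1 i hi
    · exact h2 i hi
  · intro h
    refine ⟨fun i hi => h (i, x i) (Or.inl ⟨i, hi, rfl⟩),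
            fun i hi => h (i, x' i) (Or.inr ⟨i, hi, rfl⟩)⟩

lemma card_C_union (x x' : Pat n m) :
    2 * F.card ≤ (C F x ∪ C F x').card + (K F x x').card := by
  classical
  have hinj : ∀ (g : Pat n m), Set.InjOn (fun i => (i, g i)) F := by
    intro g i _ j _ h
    exact congrArg Prod.fst h
  have hCx : (C F x).card = F.card := Finset.card_image_of_injOn (hinj x)
  have hCx' : (C F x').card = F.card := Finset.card_image_of_injOn (hinj x')
  have hsub : C F x ∩ C F x' ⊆ (K F x x').image (fun i => (i, x i)) := by
    intro c hc
    simp only [C, mem_inter, mem_image] at hc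
    obtain ⟨⟨i, hi, rfl⟩, ⟨j, hj, hji⟩⟩ := hc
    have hij : j = i := congrArg Prod.fst hji
    subst hij
    have hx : x' j = x j := congrArg Prod.snd hji
    simp only [mem_image, K, mem_filter]
    exact ⟨j, ⟨hj, hx.symm⟩, rfl⟩
  have hint : (C F x ∩ C F x').card ≤ (K F x x').card :=
    (Finset.card_le_card hsub).trans Finset.card_image_le
  have := Finset.card_union_add_card_inter (C F x) (C F x')
  omega

lemma cover_card {α β : Type*} [DecidableEq β] (T : Finset β) (g : α → Finset β) :
    ∀ (ld : List α) (S : Finset β), (∀ y ∈ S, y ∈ T ∨ ∃ x ∈ ld, y ∈ g x) →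
    (S.card : ℝ) ≤ T.card + (ld.map fun x => ((g x).card : ℝ)).sum := by
  intro ld
  induction ld with
  | nil =>
      intro S h
      simp only [List.not_mem_nil] at h
      have : S ⊆ T := by
        intro y hy
        rcases h y hy with h' | ⟨x, hx, _⟩
        · exact h'
        · simp at hx
      simpa using (Nat.cast_le.mpr (Finset.card_le_card this) : (S.card:ℝ) ≤ T.card)
  | cons a t ih =>
      intro S h
      have hsub : ∀ y ∈ S \ g a, y ∈ T ∨ ∃ x ∈ t, y ∈ g x := by
        intro y hy
        rw [mem_sdiff] at hy
        rcases h y hy.1 with h' | ⟨x, hx, hgx⟩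
        · exact Or.inl h'
        · rcases List.mem_cons.mp hx with rfl | hx'
          · exact absurd hgx hy.2
          · exact Or.inr ⟨x, hx', hgx⟩
      have h1 := ih (S \ g a) hsub
      have h2 : S.card ≤ (S \ g a).card + (g a).card := Finset.card_le_card_sdiff_add_card
      have h2' : (S.card : ℝ) ≤ ((S \ g a).card : ℝ) + (g a).card := by exact_mod_cast h2
      simp only [List.map_cons, List.sum_cons]
      linarith

lemma L1 (x : Pat n m) (l : List (Pat n m))
    (hdisj : ∀ x' ∈ l, ∀ i ∈ F, x' i ≠ x i) :
    (Miss F z l).card ≤ (A F z x ∩ Miss F z l).card * 2 ^ F.card := by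
  classical
  have key : (Miss F z l).card ≤ ((A F z x ∩ Miss F z l) ×ˢ F.powerset).card := by
    apply Finset.card_le_card_of_injOn
      (fun y => (fun i v => if i ∈ F ∧ v = x i then z i else y i v,
                 F.filter fun i => y i (x i) = z i))
    · intro y hy
      simp only [Finset.mem_coe, Miss, mem_filter, mem_univ, true_and] at hy
      rw [Finset.mem_coe, mem_product]
      constructor
      · rw [mem_inter]
        constructor
        · simp only [A, mem_filter, mem_univ, true_and]
          intro i hi
          simp [hi]
        · simp only [Miss, mem_filter, mem_univ, true_and]
          intro x' hx'
          obtain ⟨i, hi, hne⟩ := hy x' hx'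
          refine ⟨i, hi, ?_⟩
          have : ¬ (i ∈ F ∧ x' i = x i) := by
            rintro ⟨_, h⟩
            exact hdisj x' hx' i hi h
          simpa [this] using hne
      · exact mem_powerset.mpr (filter_subset _ _)
    · intro y₁ h₁ y₂ h₂ heq
      simp only [Prod.mk.injEq] at heq
      obtain ⟨hfix, hsig⟩ := heq
      funext i v
      by_cases hc : i ∈ F ∧ v = x i
      · obtain ⟨hiF, rfl⟩ := hc
        have hmem : (y₁ i (x i) = z i) ↔ (y₂ i (x i) = z i) := by
          constructor
          · intro h
            have : i ∈ F.filter fun j => y₂ j (x j) = z j := by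
              rw [← hsig]; exact mem_filter.mpr ⟨hiF, h⟩
            exact (mem_filter.mp this).2
          · intro h
            have : i ∈ F.filter fun j => y₁ j (x j) = z j := by
              rw [hsig]; exact mem_filter.mpr ⟨hiF, h⟩
            exact (mem_filter.mp this).2
        cases h1 : y₁ i (x i) <;> cases h2 : y₂ i (x i) <;> cases h3 : z i <;>
          simp_all
      · have := congrFun (congrFun hfix i) v
        simpa [if_neg hc] using this
  calc (Miss F z l).card ≤ ((A F z x ∩ Miss F z l) ×ˢ F.powerset).card := key
    _ = (A F z x ∩ Miss F z l).card * 2 ^ F.card := by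
        rw [Finset.card_product, Finset.card_powerset]

lemma L2 (D : Finset (Fin n × Fin m)) (l : List (Pat n m)) :
    (AD z D ∩ Miss F z l).card * 2 ^ D.card ≤ (Miss F z l).card := by
  classical
  have key : ((AD z D ∩ Miss F z l) ×ˢ D.powerset).card ≤ (Miss F z l).card := by
    apply Finset.card_le_card_of_injOn
      (fun p => fun i v => if (i, v) ∈ p.2 then !(z i) else p.1 i v)
    · rintro ⟨y, S⟩ hp
      rw [Finset.mem_coe, mem_product] at hp
      obtain ⟨hyAM, hS⟩ := hp
      rw [mem_inter] at hyAM
      obtain ⟨hyA, hyM⟩ := hyAM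
      simp only [Finset.mem_coe, Miss, mem_filter, mem_univ, true_and] at hyM ⊢
      intro x' hx'
      obtain ⟨i, hi, hne⟩ := hyM x' hx'
      refine ⟨i, hi, ?_⟩
      by_cases hmem : (i, x' i) ∈ S
      · simp [hmem]
      · simpa [hmem] using hne
    · rintro ⟨y₁, S₁⟩ h₁ ⟨y₂, S₂⟩ h₂ heq
      simp only at heq
      rw [Finset.mem_coe, mem_product, mem_inter] at h₁ h₂
      obtain ⟨⟨hy₁A, _⟩, hS₁⟩ := h₁
      obtain ⟨⟨hy₂A, _⟩, hS₂⟩ := h₂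
      rw [mem_powerset] at hS₁ hS₂
      simp only [AD, mem_filter, mem_univ, true_and] at hy₁A hy₂A
      have hSeq : S₁ = S₂ := by
        ext c
        obtain ⟨i, v⟩ := c
        constructor
        · intro hc
          by_contra hc2
          have := congrFun (congrFun heq i) v
          rw [if_pos hc, if_neg hc2] at this
          have hy2 : y₂ i v = z i := hy₂A (i, v) (hS₁ hc)
          rw [hy2] at this
          exact (Bool.not_ne_self (z i)) this
        · intro hc
          by_contra hc2
          have := congrFun (congrFun heq i) v
          rw [if_neg hc2, if_pos hc] at this
          have hy1 : y₁ i v = z i := hy₁A (i, v) (hS₂ hc)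
          rw [hy1] at this
          exact (Bool.not_ne_self (z i)) this.symm
      subst hSeq
      simp only [Prod.mk.injEq, and_true]
      funext i v
      by_cases hc : (i, v) ∈ S₁
      · rw [hy₁A (i,v) (hS₁ hc), hy₂A (i,v) (hS₁ hc)]
      · have := congrFun (congrFun heq i) v
        rwa [if_neg hc, if_neg hc] at this
  calc (AD z D ∩ Miss F z l).card * 2 ^ D.card
      = ((AD z D ∩ Miss F z l) ×ˢ D.powerset).card := by
        rw [Finset.card_product, Finset.card_powerset]
    _ ≤ (Miss F z l).card := key

lemma filter_map_sum_le {α : Type*} (g : α → ℝ) (hg : ∀ a, 0 ≤ g a) (p : α → Bool) :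
    ∀ l : List α, ((l.filter p).map g).sum ≤ (l.map g).sum := by
  intro l
  induction l with
  | nil => simp
  | cons a t ih =>
      by_cases h : p a = true
      · simp only [List.filter_cons, if_pos h, List.map_cons, List.sum_cons]
        linarith
      · simp only [List.filter_cons, if_neg h, List.map_cons, List.sum_cons]
        have := hg a
        linarith

lemma step (x : Pat n m) (l : List (Pat n m))
    (hok : (l.map (w F x)).sum ≤ (2:ℝ) ^ F.card / 2) :
    ((Miss F z (x :: l)).card : ℝ) ≤
      (1 - ((2:ℝ) ^ (F.card + 1))⁻¹) * (Miss F z l).card := by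
  classical
  set f := F.card with hf
  set Q : ℝ := (2:ℝ) ^ f with hQ
  have hQpos : 0 < Q := by positivity
  set lN : List (Pat n m) := l.filter (fun x' => (K F x x').card = 0) with hlN
  set lD : List (Pat n m) := l.filter (fun x' => (K F x x').card ≠ 0) with hlD
  -- basic memberships
  have hlNmem : ∀ x' ∈ lN, x' ∈ l := fun x' h => (List.mem_filter.mp h).1
  have hlDmem : ∀ x' ∈ lD, x' ∈ l := fun x' h => (List.mem_filter.mp h).1
  have hMsub : Miss F z l ⊆ Miss F z lN := Miss_anti F z hlNmem
  -- L1 for lN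
  have hdisj : ∀ x' ∈ lN, ∀ i ∈ F, x' i ≠ x i := by
    intro x' hx' i hi
    have h0 : (K F x x').card = 0 := by
      have := (List.mem_filter.mp hx').2
      simpa using this
    have : K F x x' = ∅ := Finset.card_eq_zero.mp h0
    intro hcon
    have : i ∈ K F x x' := mem_filter.mpr ⟨hi, hcon.symm⟩
    simp_all
  have ha : ((Miss F z lN).card : ℝ) ≤ ((A F z x ∩ Miss F z lN).card : ℝ) * Q := by
    have := L1 F z x lN hdisj
    have := (Nat.cast_le (α := ℝ)).mpr this
    push_cast at this
    rw [hQ, hf]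
    convert this using 2
  -- cover
  have hcover : ∀ y ∈ A F z x ∩ Miss F z lN,
      y ∈ (A F z x ∩ Miss F z l) ∨ ∃ x' ∈ lD, y ∈ (A F z x ∩ A F z x') ∩ Miss F z lN := by
    intro y hy
    rw [mem_inter] at hy
    obtain ⟨hyA, hyMN⟩ := hy
    by_cases hall : ∀ x' ∈ lD, ∃ i ∈ F, y i (x' i) ≠ z i
    · left
      rw [mem_inter]
      refine ⟨hyA, ?_⟩
      simp only [Miss, mem_filter, mem_univ, true_and] at hyMN ⊢
      intro x'' hx''
      by_cases h0 : (K F x x'').card = 0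
      · exact hyMN x'' (List.mem_filter.mpr ⟨hx'', by simpa using h0⟩)
      · exact hall x'' (List.mem_filter.mpr ⟨hx'', by simpa using h0⟩)
    · right
      push_neg at hall
      obtain ⟨x', hx', hgood⟩ := hall
      refine ⟨x', hx', ?_⟩
      rw [mem_inter, mem_inter]
      refine ⟨⟨hyA, ?_⟩, hyMN⟩
      simp only [A, mem_filter, mem_univ, true_and]
      intro i hi
      exact hgood i hi
  have hb : ((A F z x ∩ Miss F z lN).card : ℝ) ≤
      ((A F z x ∩ Miss F z l).card : ℝ) +
      (lD.map fun x' => (((A F z x ∩ A F z x') ∩ Miss F z lN).card : ℝ)).sum :=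
    cover_card _ _ lD _ hcover
  -- bound each term of the lD-sum
  have hc : ∀ x' ∈ lD, (((A F z x ∩ A F z x') ∩ Miss F z lN).card : ℝ) ≤
      ((Miss F z lN).card : ℝ) * w F x x' / Q ^ 2 := by
    intro x' hx'
    have hk0 : (K F x x').card ≠ 0 := by
      have := (List.mem_filter.mp hx').2; simpa using this
    set k := (K F x x').card with hk
    have hL2 := L2 F z (C F x ∪ C F x') lN
    rw [← A_inter_A F z x x'] at hL2
    -- (card) * 2^(|D|) ≤ MN, and 2f ≤ |D| + k
    have hDk : 2 * f ≤ (C F x ∪ C F x').card + k := card_C_union F x x'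
    have hnat : ((A F z x ∩ A F z x') ∩ Miss F z lN).card * 2 ^ (2 * f) ≤
        (Miss F z lN).card * 2 ^ k := by
      calc ((A F z x ∩ A F z x') ∩ Miss F z lN).card * 2 ^ (2*f)
          ≤ ((A F z x ∩ A F z x') ∩ Miss F z lN).card * 2 ^ ((C F x ∪ C F x').card + k) :=
            Nat.mul_le_mul_left _ (Nat.pow_le_pow_right (by norm_num) hDk)
        _ = ((A F z x ∩ A F z x') ∩ Miss F z lN).card * 2 ^ (C F x ∪ C F x').card * 2 ^ k := by
            rw [pow_add]; ring
        _ ≤ (Miss F z lN).card * 2 ^ k := Nat.mul_le_mul_right _ hL2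
    have hreal : (((A F z x ∩ A F z x') ∩ Miss F z lN).card : ℝ) * Q ^ 2 ≤
        ((Miss F z lN).card : ℝ) * 2 ^ k := by
      have := (Nat.cast_le (α := ℝ)).mpr hnat
      push_cast at this
      calc (((A F z x ∩ A F z x') ∩ Miss F z lN).card : ℝ) * Q ^ 2
          = (((A F z x ∩ A F z x') ∩ Miss F z lN).card : ℝ) * 2 ^ (2*f) := by
            rw [hQ, ← pow_mul, mul_comm f 2]
        _ ≤ ((Miss F z lN).card : ℝ) * 2 ^ k := this
    have hw : w F x x' = (2:ℝ) ^ k := by unfold w; rw [← hk, if_neg hk0]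
    rw [hw]
    exact (le_div_iff₀ (by positivity)).mpr hreal
  -- sum bound
  set MN : ℝ := ((Miss F z lN).card : ℝ) with hMN
  have hMNnn : 0 ≤ MN := by positivity
  have hd : (lD.map fun x' => (((A F z x ∩ A F z x') ∩ Miss F z lN).card : ℝ)).sum ≤
      (lD.map fun x' => MN / Q ^ 2 * w F x x').sum := by
    apply List.sum_le_sum
    intro x' hx'
    calc (((A F z x ∩ A F z x') ∩ Miss F z lN).card : ℝ)
        ≤ MN * w F x x' / Q ^ 2 := hc x' hx'
      _ = MN / Q ^ 2 * w F x x' := by ring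
  have hd2 : (lD.map fun x' => MN / Q ^ 2 * w F x x').sum
      = MN / Q ^ 2 * (lD.map (w F x)).sum := by
    induction lD with
    | nil => simp
    | cons a t ih => simp only [List.map_cons, List.sum_cons, ih]; ring
  have hd3 : (lD.map (w F x)).sum ≤ (l.map (w F x)).sum :=
    filter_map_sum_le (w F x) (w_nonneg F x) _ l
  have hS : (lD.map fun x' => (((A F z x ∩ A F z x') ∩ Miss F z lN).card : ℝ)).sum ≤
      MN / (Q * 2) := by
    have h5 : MN / Q ^ 2 * (lD.map (w F x)).sum ≤ MN / Q ^ 2 * ((2:ℝ) ^ F.card / 2) := by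
      apply mul_le_mul_of_nonneg_left (hd3.trans hok) (by positivity)
    have h6 : MN / Q ^ 2 * ((2:ℝ) ^ F.card / 2) = MN / (Q * 2) := by
      have : ((2:ℝ) ^ F.card) = Q := by rw [hQ, hf]
      rw [this]
      field_simp <;> ring
    linarith
  -- combine
  have h1 : MN / Q ≤ ((A F z x ∩ Miss F z lN).card : ℝ) := (div_le_iff₀ hQpos).mpr ha
  have hAM : MN / (Q * 2) ≤ ((A F z x ∩ Miss F z l).card : ℝ) := by
    have heq : MN / Q - MN / (Q * 2) = MN / (Q * 2) := by
      field_simp <;> ring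
    linarith
  have hMle : ((Miss F z l).card : ℝ) ≤ MN := by
    exact_mod_cast Nat.cast_le.mpr (Finset.card_le_card hMsub)
  have hfinal : ((Miss F z l).card : ℝ) / (Q * 2) ≤ ((A F z x ∩ Miss F z l).card : ℝ) := by
    refine le_trans ?_ hAM
    gcongr
  have hsplit : ((Miss F z l).card : ℝ)
      = ((Miss F z (x :: l)).card : ℝ) + ((A F z x ∩ Miss F z l).card : ℝ) := by
    exact_mod_cast congrArg (Nat.cast : ℕ → ℝ) (card_split F z x l)
  have hQ2 : (2:ℝ) ^ (F.card + 1) = Q * 2 := by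
    rw [hQ, hf, pow_succ]
  rw [hQ2]
  have : (1 - (Q * 2)⁻¹) * ((Miss F z l).card : ℝ)
      = ((Miss F z l).card : ℝ) - ((Miss F z l).card : ℝ) / (Q * 2) := by
    rw [div_eq_mul_inv]; ring
  linarith

lemma one_add_pow_le (u : ℝ) (hu : 0 ≤ u) :
    ∀ j : ℕ, 2 * (j:ℝ) * u ≤ 1 → (1 + u) ^ j ≤ 1 + 2 * (j:ℝ) * u := by
  intro j
  induction j with
  | zero => simp
  | succ j ih =>
      intro h
      have hj : 2 * (j:ℝ) * u ≤ 1 := by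
        have : 2 * (j:ℝ) * u ≤ 2 * ((j:ℝ)+1) * u := by nlinarith
        push_cast at h; linarith
      have h2 := ih hj
      have hp : (0:ℝ) ≤ (1 + u)^j := by positivity
      push_cast
      calc (1+u)^(j+1) = (1+u)^j * (1+u) := by ring
        _ ≤ (1 + 2*(j:ℝ)*u) * (1+u) := by nlinarith
        _ ≤ 1 + 2*((j:ℝ)+1)*u := by nlinarith

lemma inner_sum (X : Finset (Pat n m)) (u : ℝ) (hu : 0 ≤ u)
    (hdens : ∀ I ∈ F.powerset.erase ∅, ∀ α : Pat n m,
      ((X.filter fun x => ∀ i ∈ I, x i = α i).card : ℝ) ≤ 2 * X.card * u ^ I.card)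
    (hfu : 2 * (F.card:ℝ) * u ≤ 1) (x' : Pat n m) :
    ∑ x ∈ X, w F x x' ≤ 8 * F.card * u * X.card := by
  classical
  have h1 : ∀ x : Pat n m, w F x x' ≤ 2 * ((2:ℝ) ^ (K F x x').card - 1) := by
    intro x
    unfold w
    by_cases hk : (K F x x').card = 0
    · simp [hk]
    · rw [if_neg hk]
      have h2k : (2:ℝ) ≤ 2 ^ (K F x x').card := by
        calc (2:ℝ) = 2 ^ 1 := (pow_one 2).symm
          _ ≤ 2 ^ (K F x x').card :=
            pow_le_pow_right₀ one_le_two (Nat.one_le_iff_ne_zero.mpr hk)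
      linarith
  have hpt : ∀ x : Pat n m, (2:ℝ) ^ (K F x x').card - 1 =
      ∑ I ∈ F.powerset.erase ∅, (if ∀ i ∈ I, x i = x' i then (1:ℝ) else 0) := by
    intro x
    rw [Finset.sum_boole]
    have hfil : (F.powerset.erase ∅).filter (fun I => ∀ i ∈ I, x i = x' i)
        = (K F x x').powerset.erase ∅ := by
      ext I
      simp only [mem_filter, mem_erase, mem_powerset]
      constructor
      · rintro ⟨⟨hne, hsub⟩, hall⟩
        refine ⟨hne, fun i hi => ?_⟩
        exact mem_filter.mpr ⟨hsub hi, hall i hi⟩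
      · rintro ⟨hne, hsub⟩
        refine ⟨⟨hne, fun i hi => (mem_filter.mp (hsub hi)).1⟩,
          fun i hi => (mem_filter.mp (hsub hi)).2⟩
    rw [hfil, Finset.card_erase_of_mem (Finset.empty_mem_powerset _),
      Finset.card_powerset]
    rw [Nat.cast_sub Nat.one_le_two_pow]
    push_cast
    ring
  have h2 : ∑ x ∈ X, ((2:ℝ) ^ (K F x x').card - 1)
      = ∑ I ∈ F.powerset.erase ∅, ((X.filter fun x => ∀ i ∈ I, x i = x' i).card : ℝ) := by
    calc ∑ x ∈ X, ((2:ℝ) ^ (K F x x').card - 1)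
        = ∑ x ∈ X, ∑ I ∈ F.powerset.erase ∅, (if ∀ i ∈ I, x i = x' i then (1:ℝ) else 0) := by
          exact Finset.sum_congr rfl fun x _ => hpt x
      _ = ∑ I ∈ F.powerset.erase ∅, ∑ x ∈ X, (if ∀ i ∈ I, x i = x' i then (1:ℝ) else 0) :=
          Finset.sum_comm
      _ = ∑ I ∈ F.powerset.erase ∅, ((X.filter fun x => ∀ i ∈ I, x i = x' i).card : ℝ) := by
          exact Finset.sum_congr rfl fun I _ => by rw [Finset.sum_boole]
  have h3 : ∑ I ∈ F.powerset.erase ∅, ((X.filter fun x => ∀ i ∈ I, x i = x' i).card : ℝ)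
      ≤ ∑ I ∈ F.powerset.erase ∅, 2 * (X.card:ℝ) * u ^ I.card :=
    Finset.sum_le_sum fun I hI => hdens I hI x'
  have h4 : ∑ I ∈ F.powerset, (u:ℝ) ^ I.card = (u + 1) ^ F.card := by
    have := Finset.prod_add (fun _ : Fin n => u) (fun _ : Fin n => (1:ℝ)) F
    simp only [Finset.prod_const, Finset.prod_const_one, one_pow, mul_one] at this
    rw [this]
  have h5 : ∑ I ∈ F.powerset.erase ∅, (u:ℝ) ^ I.card = (u + 1) ^ F.card - 1 := by
    rw [Finset.sum_erase_eq_sub (Finset.empty_mem_powerset _), h4]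
    simp
  have h6 : (u + 1) ^ F.card - 1 ≤ 2 * (F.card:ℝ) * u := by
    have := one_add_pow_le u hu F.card hfu
    have e : (1 + u) = (u + 1) := by ring
    rw [e] at this
    linarith
  calc ∑ x ∈ X, w F x x'
      ≤ ∑ x ∈ X, 2 * ((2:ℝ) ^ (K F x x').card - 1) :=
        Finset.sum_le_sum fun x _ => h1 x
    _ = 2 * ∑ x ∈ X, ((2:ℝ) ^ (K F x x').card - 1) := by rw [Finset.mul_sum]
    _ = 2 * ∑ I ∈ F.powerset.erase ∅, ((X.filter fun x => ∀ i ∈ I, x i = x' i).card : ℝ) := by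
        rw [h2]
    _ ≤ 2 * ∑ I ∈ F.powerset.erase ∅, 2 * (X.card:ℝ) * u ^ I.card := by linarith
    _ = 4 * (X.card:ℝ) * ∑ I ∈ F.powerset.erase ∅, u ^ I.card := by
        rw [Finset.mul_sum, Finset.mul_sum]
        apply Finset.sum_congr rfl
        intro I _
        ring
    _ = 4 * (X.card:ℝ) * ((u + 1) ^ F.card - 1) := by rw [h5]
    _ ≤ 4 * (X.card:ℝ) * (2 * (F.card:ℝ) * u) := by
        apply mul_le_mul_of_nonneg_left h6 (by positivity)
    _ = 8 * F.card * u * X.card := by ring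

lemma greedy (X : Finset (Pat n m)) (hX : X.Nonempty) (u : ℝ) (hu : 0 ≤ u)
    (hdens : ∀ I ∈ F.powerset.erase ∅, ∀ α : Pat n m,
      ((X.filter fun x => ∀ i ∈ I, x i = α i).card : ℝ) ≤ 2 * X.card * u ^ I.card)
    (hfu : 2 * (F.card:ℝ) * u ≤ 1)
    (l : List (Pat n m))
    (hlen : (l.length : ℝ) * (8 * F.card * u) ≤ (2:ℝ) ^ F.card / 2) :
    ∃ x ∈ X, (l.map (w F x)).sum ≤ (2:ℝ) ^ F.card / 2 := by
  classical
  by_contra hbad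
  push_neg at hbad
  have hup : ∀ l' : List (Pat n m), ∑ x ∈ X, (l'.map (w F x)).sum
      ≤ (l'.length : ℝ) * (8 * F.card * u) * X.card := by
    intro l'
    induction l' with
    | nil => simp
    | cons a t ih =>
        simp only [List.map_cons, List.sum_cons, List.length_cons]
        rw [Finset.sum_add_distrib]
        have := inner_sum F X u hu hdens hfu a
        push_cast
        nlinarith [this, ih]
  have hlow : (X.card : ℝ) * ((2:ℝ) ^ F.card / 2) < ∑ x ∈ X, (l.map (w F x)).sum := by
    have := Finset.sum_lt_sum_of_nonempty hX (fun x hx => hbad x hx)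
    rwa [Finset.sum_const, nsmul_eq_mul] at this
  have hXpos : (0:ℝ) < X.card := by
    exact_mod_cast Finset.card_pos.mpr hX
  have := hup l
  nlinarith [hlen, hXpos]

lemma iterate (X : Finset (Pat n m)) (hX : X.Nonempty) (u : ℝ) (hu : 0 ≤ u)
    (hdens : ∀ I ∈ F.powerset.erase ∅, ∀ α : Pat n m,
      ((X.filter fun x => ∀ i ∈ I, x i = α i).card : ℝ) ≤ 2 * X.card * u ^ I.card)
    (hfu : 2 * (F.card:ℝ) * u ≤ 1)
    (s : ℕ) (hs : (s : ℝ) * (8 * F.card * u) ≤ (2:ℝ) ^ F.card / 2) :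
    ∃ l : List (Pat n m), (∀ x ∈ l, x ∈ X) ∧ l.length = s ∧
      ((Miss F z l).card : ℝ) ≤
        (1 - ((2:ℝ) ^ (F.card + 1))⁻¹) ^ s * (Fintype.card (Tab n m)) := by
  classical
  induction s with
  | zero =>
      refine ⟨[], by simp, rfl, ?_⟩
      have : Miss F z ([] : List (Pat n m)) = univ := by
        simp [Miss]
      rw [this, Finset.card_univ]
      simp
  | succ s ih =>
      have h8 : (0:ℝ) ≤ 8 * F.card * u := by positivity
      have hmono : (s:ℝ) * (8 * F.card * u) ≤ ((s:ℕ)+1 : ℝ) * (8 * F.card * u) := by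
        apply mul_le_mul_of_nonneg_right _ h8
        push_cast; linarith
      have hs' : (s : ℝ) * (8 * F.card * u) ≤ (2:ℝ) ^ F.card / 2 := by
        refine le_trans hmono ?_
        push_cast at hs ⊢
        exact hs
      obtain ⟨l, hmem, hlenl, hbound⟩ := ih hs'
      obtain ⟨x, hxX, hok⟩ := greedy F X hX u hu hdens hfu l (by rw [hlenl]; exact hs')
      refine ⟨x :: l, ?_, by simp [hlenl], ?_⟩
      · intro x'' hx''
        rcases List.mem_cons.mp hx'' with rfl | h
        · exact hxX
        · exact hmem x'' h
      have hstep := step F z x l hok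
      have hq : (0:ℝ) ≤ 1 - ((2:ℝ) ^ (F.card + 1))⁻¹ := by
        have h1 : (1:ℝ) ≤ (2:ℝ) ^ (F.card + 1) := one_le_pow₀ one_le_two
        have := inv_le_one_of_one_le₀ h1
        linarith
      calc ((Miss F z (x :: l)).card : ℝ)
          ≤ (1 - ((2:ℝ) ^ (F.card + 1))⁻¹) * (Miss F z l).card := hstep
        _ ≤ (1 - ((2:ℝ) ^ (F.card + 1))⁻¹) *
            ((1 - ((2:ℝ) ^ (F.card + 1))⁻¹) ^ s * (Fintype.card (Tab n m))) :=
            mul_le_mul_of_nonneg_left hbound hq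
        _ = (1 - ((2:ℝ) ^ (F.card + 1))⁻¹) ^ (s+1) * (Fintype.card (Tab n m)) := by
            rw [pow_succ]
            ring

end SRFS

open SRFS

set_option maxHeartbeats 1000000
set_option maxRecDepth 8000

/-- **Full support of structured rectangles.** For `ρ ∈ {0,1,*}^n` (encoded as
`ρ : Fin n → Option Bool`) and a `ρ`-essentially-structured rectangle `X × Y` with
`nm - log₂|Y| ≤ n³ + 1`: for every `z` agreeing with `ρ` on `fix(ρ)` there are
`x ∈ X`, `y ∈ Y` with `G(x,y) = z`. -/
theorem structured_rectangle_full_support :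
    ∃ N : ℕ, ∀ n : ℕ, N ≤ n →
    ∀ (ρ : Fin n → Option Bool)
      (X : Finset (Fin n → Fin (n ^ 256))) (Y : Finset (Fin n → Fin (n ^ 256) → Bool)),
      X.Nonempty → Y.Nonempty →
      -- all elements of X agree on the fixed positions of ρ
      (∀ x ∈ X, ∀ x' ∈ X, ∀ i : Fin n, ρ i ≠ none → x i = x' i) →
      -- the projection of X to free(ρ) is 0.9-essentially-dense
      (∀ I : Finset (Fin n), (∀ i ∈ I, ρ i = none) → I.Nonempty →
        ∀ α : Fin n → Fin (n ^ 256),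
        ((X.filter fun x => ∀ i ∈ I, x i = α i).card : ℝ) ≤
          2 * (X.card : ℝ) * ((n ^ 256 : ℕ) : ℝ) ^ (-(0.9 * (I.card : ℝ)))) →
      -- every output G(x,y) on X × Y is consistent with ρ
      (∀ x ∈ X, ∀ y ∈ Y, ∀ i : Fin n, ∀ b : Bool, ρ i = some b → y i (x i) = b) →
      -- deficiency of Y at most n³ + 1
      ((n : ℝ) * ((n ^ 256 : ℕ) : ℝ) - Real.logb 2 (Y.card : ℝ) ≤ (n : ℝ) ^ 3 + 1) →
      ∀ z : Fin n → Bool,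
        (∀ i : Fin n, ∀ b : Bool, ρ i = some b → z i = b) →
        ∃ x ∈ X, ∃ y ∈ Y, ∀ i, y i (x i) = z i := by
  classical
  use 16
  intro n hn ρ X Y hXne hYne hagree hdens hout hdef z hz
  by_contra hcon
  push_neg at hcon
  -- hcon : ∀ x ∈ X, ∀ y ∈ Y, ∃ i, y i (x i) ≠ z i
  set nn : ℝ := (n:ℝ) with hnn_def
  have hn0 : 0 < n := lt_of_lt_of_le (by norm_num) hn
  have hnn16 : (16:ℝ) ≤ nn := by rw [hnn_def]; exact_mod_cast hn
  have hnn1 : (1:ℝ) ≤ nn := by linarith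
  have hnn0 : (0:ℝ) < nn := by linarith
  set F : Finset (Fin n) := univ.filter (fun i => ρ i = none) with hF
  have hmpos : (0:ℝ) < ((n^256:ℕ):ℝ) := by
    have : 0 < n^256 := pow_pos hn0 _
    exact_mod_cast this
  set u : ℝ := ((n^256 : ℕ) : ℝ) ^ (-(0.9:ℝ)) with hu_def
  have hu0 : (0:ℝ) ≤ u := Real.rpow_nonneg (le_of_lt hmpos) _
  -- density in u-power form
  have hdens' : ∀ I ∈ F.powerset.erase ∅, ∀ α : Pat n (n^256),
      ((X.filter fun x => ∀ i ∈ I, x i = α i).card : ℝ) ≤ 2 * X.card * u ^ I.card := by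
    intro I hI α
    rw [mem_erase, mem_powerset] at hI
    have hfree : ∀ i ∈ I, ρ i = none := fun i hi => (mem_filter.mp (hI.2 hi)).2
    have hneI : I.Nonempty := nonempty_iff_ne_empty.mpr hI.1
    have h := hdens I hfree hneI α
    have hrw : ((n^256:ℕ):ℝ) ^ (-(0.9 * (I.card:ℝ))) = u ^ I.card := by
      rw [hu_def, ← Real.rpow_natCast (((n^256:ℕ):ℝ) ^ (-(0.9:ℝ))) I.card,
        ← Real.rpow_mul (le_of_lt hmpos)]
      congr 1
      ring
    rw [hrw] at h
    exact h
  -- numeric: u * nn^230 ≤ 1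
  have hcast256 : ((n^256:ℕ):ℝ) = nn^256 := by push_cast; rfl
  have hu230 : u * nn^230 ≤ 1 := by
    have e1 : u = nn ^ (-(230.4:ℝ)) := by
      rw [hu_def, hcast256, ← Real.rpow_natCast nn 256, ← Real.rpow_mul (le_of_lt hnn0)]
      norm_num
    have e2 : u * nn^230 = nn ^ (-(230.4:ℝ) + (230:ℕ)) := by
      rw [e1, Real.rpow_add hnn0, Real.rpow_natCast]
    rw [e2]
    apply Real.rpow_le_one_of_one_le_of_nonpos hnn1
    norm_num
  have hfn : (F.card : ℝ) ≤ nn := by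
    have h : F.card ≤ n := by
      calc F.card ≤ (univ : Finset (Fin n)).card := card_le_card (filter_subset _ _)
        _ = n := by rw [card_univ, Fintype.card_fin]
    rw [hnn_def]
    exact_mod_cast h
  have hfcard0 : (0:ℝ) ≤ (F.card : ℝ) := by positivity
  have hfu : 2 * (F.card:ℝ) * u ≤ 1 := by
    have hA : nn ≤ nn^229 := le_self_pow₀ hnn1 (by norm_num)
    have hC : (2:ℝ) ≤ nn^229 := le_trans (by linarith) hA
    have h2nn : 2 * nn ≤ nn^230 := by
      have := mul_le_mul_of_nonneg_right hC (le_of_lt hnn0)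
      calc 2 * nn ≤ nn^229 * nn := this
        _ = nn^230 := by ring
    have h1 : 2 * nn * u ≤ nn^230 * u := mul_le_mul_of_nonneg_right h2nn hu0
    have h2 : 2 * (F.card:ℝ) * u ≤ 2 * nn * u := by
      apply mul_le_mul_of_nonneg_right _ hu0
      linarith
    nlinarith [hu230]
  set s : ℕ := 2^F.card * n^4 with hs_def
  have h16u : 16 * nn^5 * u ≤ 1 := by
    have hD : (16:ℝ) ≤ nn^225 := le_trans hnn16 (le_self_pow₀ hnn1 (by norm_num))
    have hE : 16 * nn^5 * u ≤ nn^225 * nn^5 * u := by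
      apply mul_le_mul_of_nonneg_right _ hu0
      have h5 : (0:ℝ) ≤ nn^5 := by positivity
      nlinarith
    have hF2 : nn^225 * nn^5 * u = u * nn^230 := by ring
    linarith [hu230]
  have hs : (s:ℝ) * (8*(F.card:ℝ)*u) ≤ (2:ℝ)^F.card/2 := by
    have hcs : (s:ℝ) = 2^F.card * nn^4 := by
      rw [hs_def]; push_cast; ring
    rw [hcs]
    have hQ0 : (0:ℝ) ≤ (2:ℝ)^F.card := by positivity
    have hkey : 8*(F.card:ℝ)*u*nn^4 ≤ 1/2 := by
      have ha : 8*(F.card:ℝ)*u*nn^4 ≤ 8*nn*u*nn^4 := by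
        have : (0:ℝ) ≤ u * nn^4 := by positivity
        nlinarith
      have hb : 8*nn*u*nn^4 = (16*nn^5*u)/2 := by ring
      linarith [h16u]
    calc 2^F.card * nn^4 * (8*(F.card:ℝ)*u) = (2:ℝ)^F.card * (8*(F.card:ℝ)*u*nn^4) := by ring
      _ ≤ (2:ℝ)^F.card * (1/2) := mul_le_mul_of_nonneg_left hkey hQ0
      _ = (2:ℝ)^F.card/2 := by ring
  obtain ⟨l, hmem, hlen, hbound⟩ := iterate F z X hXne u hu0 hdens' hfu s hs
  -- Y is contained in the miss set
  have hYsub : Y ⊆ Miss F z l := by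
    intro y hy
    simp only [Miss, mem_filter, mem_univ, true_and]
    intro x hx
    obtain ⟨i, hi⟩ := hcon x (hmem x hx) y hy
    refine ⟨i, ?_, hi⟩
    rw [hF, mem_filter]
    refine ⟨mem_univ _, ?_⟩
    by_contra hnone
    obtain ⟨b, hb⟩ := Option.ne_none_iff_exists'.mp hnone
    exact hi (by rw [hout x (hmem x hx) y hy i b hb, hz i b hb])
  have hYM : ((Y.card:ℕ):ℝ) ≤ ((Miss F z l).card : ℝ) := by
    exact_mod_cast card_le_card hYsub
  -- cardinality of table space
  have hTab : (Fintype.card (Tab n (n^256)) : ℝ) = (2:ℝ) ^ ((n^256*n : ℕ)) := by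
    have : Fintype.card (Tab n (n^256)) = 2 ^ (n^256*n) := by
      rw [show Fintype.card (Tab n (n^256))
            = (Fintype.card (Fin (n^256) → Bool)) ^ n by
          simp [Fintype.card_fun]]
      rw [show Fintype.card (Fin (n^256) → Bool) = 2 ^ (n^256) by simp [Fintype.card_fun]]
      rw [← pow_mul]
    rw [this]
    push_cast
    ring
  -- lower bound on |Y| from deficiency
  have hY0 : (0:ℝ) < (Y.card:ℝ) := by
    exact_mod_cast card_pos.mpr hYne
  set E : ℝ := nn * ((n^256:ℕ):ℝ) with hE_def
  have hlogb : E - (nn^3 + 1) ≤ Real.logb 2 (Y.card:ℝ) := by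
    rw [hE_def]
    linarith [hdef]
  have hYlow : (2:ℝ) ^ (E - (nn^3+1)) ≤ (Y.card:ℝ) := by
    calc (2:ℝ)^(E - (nn^3+1)) ≤ (2:ℝ)^(Real.logb 2 (Y.card:ℝ)) :=
          Real.rpow_le_rpow_of_exponent_le one_le_two hlogb
      _ = (Y.card:ℝ) := Real.rpow_logb (by norm_num) (by norm_num) hY0
  -- upper bound chain
  set q : ℝ := ((2:ℝ)^(F.card+1))⁻¹ with hq_def
  have hq0 : 0 < q := by rw [hq_def]; positivity
  have hq1 : q ≤ 1 := by
    rw [hq_def]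
    exact inv_le_one_of_one_le₀ (one_le_pow₀ one_le_two)
  have hqs : q * (s:ℝ) = nn^4/2 := by
    rw [hq_def, hs_def]
    push_cast
    rw [pow_succ]
    have h2f : (0:ℝ) < (2:ℝ)^F.card := by positivity
    field_simp
    ring
  have hup1 : ((1:ℝ) - q)^s ≤ Real.exp (-(nn^4/2)) := by
    have hstep : (1:ℝ) - q ≤ Real.exp (-q) := by
      have := Real.add_one_le_exp (-q)
      linarith
    calc ((1:ℝ) - q)^s ≤ (Real.exp (-q))^s := pow_le_pow_left₀ (by linarith) hstep s
      _ = Real.exp ((s:ℝ) * (-q)) := by rw [← Real.exp_nat_mul]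
      _ = Real.exp (-(q * (s:ℝ))) := by congr 1; ring
      _ = Real.exp (-(nn^4/2)) := by rw [hqs]
  have hup2 : Real.exp (-(nn^4/2)) < (2:ℝ) ^ (-(nn^3+1)) := by
    rw [Real.rpow_def_of_pos (by norm_num : (0:ℝ) < 2)]
    apply Real.exp_lt_exp.mpr
    have hlog : Real.log 2 < 0.6931471808 := Real.log_two_lt_d9
    have hlogpos : 0 < Real.log 2 := Real.log_pos (by norm_num)
    have h3 : (0:ℝ) < nn^3 := by positivity
    have hb := mul_lt_mul_of_pos_right hlog h3
    have h16c : 16 * nn^3 ≤ nn^4 := by nlinarith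
    have h1nn3 : (1:ℝ) ≤ nn^3 := one_le_pow₀ hnn1
    nlinarith
  have hEE : ((2:ℝ) ^ (n^256*n : ℕ) : ℝ) = (2:ℝ) ^ E := by
    rw [← Real.rpow_natCast 2 (n^256*n)]
    congr 1
    rw [hE_def, hcast256]
    push_cast
    ring
  have h2E0 : (0:ℝ) < (2:ℝ) ^ E := Real.rpow_pos_of_pos (by norm_num) _
  have hfinal : (Y.card:ℝ) < (2:ℝ) ^ (E - (nn^3+1)) := by
    have hchain : (Y.card:ℝ) ≤ ((1:ℝ) - q)^s * (2:ℝ)^E := by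
      calc (Y.card:ℝ) ≤ ((Miss F z l).card : ℝ) := hYM
        _ ≤ ((1:ℝ) - q)^s * (Fintype.card (Tab n (n^256)) : ℝ) := hbound
        _ = ((1:ℝ) - q)^s * (2:ℝ)^E := by rw [hTab, hEE]
    have hlt : ((1:ℝ) - q)^s < (2:ℝ)^(-(nn^3+1)) := lt_of_le_of_lt hup1 hup2
    calc (Y.card:ℝ) ≤ ((1:ℝ) - q)^s * (2:ℝ)^E := hchain
      _ < (2:ℝ)^(-(nn^3+1)) * (2:ℝ)^E := by
          exact mul_lt_mul_of_pos_right hlt h2E0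
      _ = (2:ℝ) ^ (E - (nn^3+1)) := by
          rw [← Real.rpow_add (by norm_num : (0:ℝ) < 2)]
          congr 1
          ring
  linarith [hYlow, hfinal]
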